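/- Suppose ξ_{1,r} < ξ_{2,r} (so ξ_r = ξ_{2,r}). Then the upper quantization coefficient of μ of order r at dimension ξ_r is finite, i.e. limsup_{n→∞} n^{r/ξ_r} · e_{n,r}(μ)^r < ∞. -/

import Mathlib

open MeasureTheory Filter Set Metric

/-- The `n`-th quantization error of order `r` of a measure `μ` on `ℝ^q`:
`e_{n,r}(μ) = inf { (∫ d(x,α)^r dμ)^{1/r} : α ⊆ ℝ^q, 1 ≤ card α ≤ n }`. -/
noncomputable def quantErr {q : ℕ} (μ : Measure (EuclideanSpace ℝ (Fin q))) (r : ℝ)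
    (n : ℕ) : ℝ :=
  sInf ((fun α : Finset (EuclideanSpace ℝ (Fin q)) =>
      (∫ x, infDist x (α : Set (EuclideanSpace ℝ (Fin q))) ^ r ∂μ) ^ (1 / r)) ''
    {α : Finset (EuclideanSpace ℝ (Fin q)) | α.Nonempty ∧ α.card ≤ n})

namespace ZhuAux

open scoped ENNReal

variable {X : Type*} [MetricSpace X] [DecidableEq X]

/-- fuel for the recursive codebook constructions -/
noncomputable def fuel (M δ : ℝ) : ℕ := ⌈Real.log δ / Real.log M⌉₊ + 1

lemma fuel_spec {M δ : ℝ} (hM0 : 0 < M) (hM1 : M < 1) (hδ : 0 < δ) :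
    M ^ fuel M δ < δ := by
  rw [fuel]
  set n := ⌈Real.log δ / Real.log M⌉₊ + 1 with hn
  have hlogM : Real.log M < 0 := Real.log_neg hM0 hM1
  have hgt : (Real.log δ / Real.log M) < (n : ℝ) := by
    rcases le_or_gt (Real.log δ / Real.log M) 0 with h | h
    · calc Real.log δ / Real.log M ≤ 0 := h
        _ < n := by positivity
    · have : (⌈Real.log δ / Real.log M⌉₊ : ℝ) < n := by
        rw [hn]; push_cast; linarith
      linarith [Nat.le_ceil (Real.log δ / Real.log M)]
  have h2 : (n : ℝ) * Real.log M < Real.log δ := by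
    have := (div_lt_iff_of_neg hlogM).mp hgt
    linarith
  have h3 : Real.log (M ^ n) < Real.log δ := by rwa [Real.log_pow]
  have hMn : (0:ℝ) < M ^ n := by positivity
  exact (Real.log_lt_log_iff hMn hδ).mp h3

/-- contraction of `infDist` under a similitude, for finite codebooks -/
lemma infDist_image_le {f : X → X} {c : ℝ} (hc : 0 ≤ c)
    (hf : ∀ x y, dist (f x) (f y) = c * dist x y) (γ : Finset X) (hγ : γ.Nonempty) (x : X) :
    infDist (f x) ((γ.image f : Finset X) : Set X) ≤ c * infDist x (γ : Set X) := by
  obtain ⟨b, hb, hd⟩ := γ.finite_toSet.isCompact.exists_infDist_eq_dist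
    (by exact_mod_cast hγ) x
  calc infDist (f x) ((γ.image f : Finset X) : Set X) ≤ dist (f x) (f b) := by
        apply infDist_le_dist_of_mem
        rw [Finset.coe_image]
        exact Set.mem_image_of_mem _ hb
    _ = c * dist x b := hf x b
    _ = c * infDist x (γ : Set X) := by rw [← hd]

/-- one-point quantization error bound -/
lemma err_singleton [MeasurableSpace X] [BorelSpace X]
    (m : Measure X) [IsProbabilityMeasure m] (a : X) (R r : ℝ) (hR : 0 ≤ R) (hr : 0 ≤ r)
    (hsupp : ∀ᵐ x ∂m, dist x a ≤ R) :
    ∫⁻ x, ENNReal.ofReal (infDist x (({a} : Finset X) : Set X) ^ r) ∂m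
      ≤ ENNReal.ofReal (R ^ r) := by
  have h1 : ∀ᵐ x ∂m, ENNReal.ofReal (infDist x (({a} : Finset X) : Set X) ^ r)
      ≤ ENNReal.ofReal (R ^ r) := by
    filter_upwards [hsupp] with x hx
    apply ENNReal.ofReal_le_ofReal
    apply Real.rpow_le_rpow infDist_nonneg _ hr
    simpa [Finset.coe_singleton] using hx
  calc ∫⁻ x, ENNReal.ofReal (infDist x (({a} : Finset X) : Set X) ^ r) ∂m
      ≤ ∫⁻ _, ENNReal.ofReal (R ^ r) ∂m := lintegral_mono_ae h1
    _ = ENNReal.ofReal (R ^ r) := by simp [lintegral_const]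

lemma meas_gg [MeasurableSpace X] [BorelSpace X] (γ : Set X) (r : ℝ) (hr : 0 ≤ r) :
    Measurable (fun x => ENNReal.ofReal (infDist x γ ^ r)) := by
  exact (ENNReal.continuous_ofReal.comp
    ((continuous_infDist_pt γ).rpow_const (fun x => Or.inr hr))).measurable

/-- mass escape to infinity has measure zero, given a contraction-type step -/
lemma vanish_of_step [MeasurableSpace X] [OpensMeasurableSpace X]
    (m : Measure X) [IsFiniteMeasure m] (a : X) (R0 : ℝ)
    (hstep : ∀ R, R0 ≤ R → m ((closedBall a R)ᶜ) ≤ m ((closedBall a (R + 1))ᶜ)) :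
    m ((closedBall a R0)ᶜ) = 0 := by
  have hmono : ∀ k : ℕ, m ((closedBall a R0)ᶜ) ≤ m ((closedBall a (R0 + k))ᶜ) := by
    intro k
    induction k with
    | zero => simp
    | succ k ih =>
      refine ih.trans ?_
      have h := hstep (R0 + k) (by linarith [Nat.cast_nonneg (α := ℝ) k])
      push_cast; rwa [← add_assoc]
  have hanti : Antitone (fun k : ℕ => (closedBall a (R0 + k))ᶜ) := by
    intro i j hij
    apply compl_subset_compl.mpr
    apply closedBall_subset_closedBall
    have : (i:ℝ) ≤ j := by exact_mod_cast hij
    linarith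
  have hiInter : (⋂ k : ℕ, (closedBall a (R0 + k))ᶜ) = ∅ := by
    rw [← compl_iUnion, compl_empty_iff]
    ext x
    simp only [mem_iUnion, mem_closedBall, mem_univ, iff_true]
    obtain ⟨k, hk⟩ := exists_nat_ge (dist x a - R0)
    exact ⟨k, by linarith⟩
  have htend : Tendsto (fun k : ℕ => m ((closedBall a (R0 + k))ᶜ)) atTop
      (nhds (m (⋂ k : ℕ, (closedBall a (R0 + k))ᶜ))) := by
    apply tendsto_measure_iInter_atTop
    · exact fun k => (measurableSet_closedBall.compl).nullMeasurableSet
    · exact hanti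
    · exact ⟨0, measure_ne_top m _⟩
  rw [hiInter, measure_empty] at htend
  have := ge_of_tendsto' htend (fun k => hmono k)
  simpa using this

noncomputable def codeN {N : ℕ} (f : Fin N → X → X) (a : X) (v : Fin N → ℝ) :
    ℕ → ℝ → Finset X
  | 0, _ => {a}
  | n + 1, δ =>
    if 1 < δ then {a}
    else Finset.univ.biUnion fun i : Fin N => (codeN f a v n (δ / v i)).image (f i)

lemma codeN_nonempty {N : ℕ} [NeZero N] (f : Fin N → X → X) (a : X) (v : Fin N → ℝ) :
    ∀ n δ, (codeN f a v n δ).Nonempty := by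
  intro n
  induction n with
  | zero => intro δ; exact ⟨a, by simp [codeN]⟩
  | succ n ih =>
    intro δ
    rw [codeN]
    split
    · exact ⟨a, Finset.mem_singleton_self a⟩
    · obtain ⟨x, hx⟩ := ih (δ / v 0)
      exact ⟨f 0 x, Finset.mem_biUnion.mpr ⟨0, Finset.mem_univ _,
        Finset.mem_image_of_mem _ hx⟩⟩

lemma codeN_card {N : ℕ} (f : Fin N → X → X) (a : X) (v : Fin N → ℝ)
    (κ c M : ℝ) (hκ0 : 0 < κ) (hc : 0 < c) (hM : 0 < M)
    (hvc : ∀ i, c ≤ v i) (hvM : ∀ i, v i ≤ M) (hv0 : ∀ i, 0 < v i)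
    (hκeq : ∑ i, v i ^ κ = 1) :
    ∀ n δ, 0 < δ → δ ≤ 1 / c → M ^ n < δ →
      ((codeN f a v n δ).card : ℝ) ≤ (c * δ) ^ (-κ) := by
  have hone : ∀ δ : ℝ, 0 < δ → δ ≤ 1 / c → (1 : ℝ) ≤ (c * δ) ^ (-κ) := by
    intro δ hδ hδc
    have h1 : c * δ ≤ 1 := by
      rw [div_eq_mul_inv, one_mul] at hδc
      calc c * δ ≤ c * c⁻¹ := by
            apply mul_le_mul_of_nonneg_left hδc hc.le
        _ = 1 := by field_simp
    have h0 : 0 < c * δ := by positivity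
    exact Real.one_le_rpow_of_pos_of_le_one_of_nonpos h0 h1 (by linarith)
  intro n
  induction n with
  | zero =>
    intro δ hδ hδc _
    simp only [codeN, Finset.card_singleton, Nat.cast_one]
    exact hone δ hδ hδc
  | succ n ih =>
    intro δ hδ hδc hfuel
    rw [codeN]
    split
    · simpa using hone δ hδ hδc
    · rename_i hnot
      push_neg at hnot
      calc ((Finset.univ.biUnion fun i : Fin N =>
              (codeN f a v n (δ / v i)).image (f i)).card : ℝ)
          ≤ ∑ i : Fin N, (((codeN f a v n (δ / v i)).image (f i)).card : ℝ) := by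
            exact_mod_cast Nat.cast_le.mpr (Finset.card_biUnion_le)
        _ ≤ ∑ i : Fin N, ((codeN f a v n (δ / v i)).card : ℝ) := by
            apply Finset.sum_le_sum
            intro i _
            exact_mod_cast Finset.card_image_le
        _ ≤ ∑ i : Fin N, (c * (δ / v i)) ^ (-κ) := by
            apply Finset.sum_le_sum
            intro i _
            apply ih
            · exact div_pos hδ (hv0 i)
            · calc δ / v i ≤ 1 / c := by
                    apply div_le_div₀ zero_le_one hnot hc (hvc i)
                _ = 1 / c := rfl
            · rw [lt_div_iff₀ (hv0 i)]
              calc M ^ n * v i ≤ M ^ n * M := by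
                    apply mul_le_mul_of_nonneg_left (hvM i) (by positivity)
                _ = M ^ (n + 1) := by ring
                _ < δ := hfuel
        _ = (c * δ) ^ (-κ) * ∑ i : Fin N, v i ^ κ := by
            rw [Finset.mul_sum]
            apply Finset.sum_congr rfl
            intro i _
            have hv := (hv0 i)
            rw [show c * (δ / v i) = (c * δ) / v i by ring,
              Real.div_rpow (by positivity) hv.le, Real.rpow_neg hv.le]
            field_simp
        _ = (c * δ) ^ (-κ) := by rw [hκeq, mul_one]

lemma codeN_err {N : ℕ} [NeZero N] [MeasurableSpace X] [BorelSpace X]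
    (ν : Measure X) [IsProbabilityMeasure ν]
    (f : Fin N → X → X) (s tw : Fin N → ℝ) (r : ℝ) (hr : 0 < r)
    (hs : ∀ i, 0 < s i)
    (hsim : ∀ i x y, dist (f i x) (f i y) = s i * dist x y)
    (htw : ∀ i, 0 < tw i)
    (hstep : ∀ g : X → ℝ≥0∞, Measurable g →
      ∫⁻ x, g x ∂ν = ∑ i, ENNReal.ofReal (tw i) * ∫⁻ x, g (f i x) ∂ν)
    (a : X) (R : ℝ) (hR : 0 < R) (hsupp : ∀ᵐ x ∂ν, dist x a ≤ R)
    (κ M : ℝ) (hκ0 : 0 < κ) (hκ1 : κ < 1) (hM : 0 < M)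
    (hvM : ∀ i, tw i * s i ^ r ≤ M)
    (hκeq : ∑ i, (tw i * s i ^ r) ^ κ = 1) :
    ∀ n δ, 0 < δ → M ^ n < δ →
      ∫⁻ x, ENNReal.ofReal
        (infDist x ((codeN f a (fun i => tw i * s i ^ r) n δ : Finset X) : Set X) ^ r) ∂ν
        ≤ ENNReal.ofReal (R ^ r * δ ^ (1 - κ)) := by
  set v : Fin N → ℝ := fun i => tw i * s i ^ r with hv
  have hv0 : ∀ i, 0 < v i := fun i => by
    have := hs i; have := htw i
    positivity
  have hbase : ∀ δ : ℝ, 1 ≤ δ →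
      ∫⁻ x, ENNReal.ofReal (infDist x (({a} : Finset X) : Set X) ^ r) ∂ν
        ≤ ENNReal.ofReal (R ^ r * δ ^ (1 - κ)) := by
    intro δ hδ
    refine (err_singleton ν a R r hR.le hr.le hsupp).trans (ENNReal.ofReal_le_ofReal ?_)
    have h1 : (1:ℝ) ≤ δ ^ (1 - κ) := Real.one_le_rpow hδ (by linarith)
    nlinarith [Real.rpow_nonneg hR.le r]
  intro n
  induction n with
  | zero =>
    intro δ hδ hfuel
    simp only [pow_zero] at hfuel
    show ∫⁻ x, ENNReal.ofReal (infDist x (({a} : Finset X) : Set X) ^ r) ∂ν ≤ _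
    exact hbase δ hfuel.le
  | succ n ih =>
    intro δ hδ hfuel
    rw [codeN]
    split
    · rename_i h1δ
      exact hbase δ h1δ.le
    · rename_i hnot
      push_neg at hnot
      set α : Finset X := Finset.univ.biUnion
        (fun i : Fin N => (codeN f a v n (δ / v i)).image (f i)) with hα
      have hptwise : ∀ (i : Fin N) (x : X),
          ENNReal.ofReal (infDist (f i x) (α : Set X) ^ r)
            ≤ ENNReal.ofReal (s i ^ r) *
              ENNReal.ofReal (infDist x ((codeN f a v n (δ / v i) : Finset X) : Set X) ^ r) := by
        intro i x
        have hne := codeN_nonempty f a v n (δ / v i)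
        have hsub : ((codeN f a v n (δ / v i)).image (f i) : Set X) ⊆ (α : Set X) :=
          Finset.coe_subset.mpr (Finset.subset_biUnion_of_mem
            (fun j : Fin N => (codeN f a v n (δ / v j)).image (f j)) (Finset.mem_univ i))
        have h1 : infDist (f i x) (α : Set X)
            ≤ infDist (f i x) (((codeN f a v n (δ / v i)).image (f i) : Finset X) : Set X) :=
          infDist_le_infDist_of_subset hsub (by
            simpa using hne.image (f i))
        have h2 := infDist_image_le (hs i).le (hsim i) _ hne x
        have h3 : infDist (f i x) (α : Set X)
            ≤ s i * infDist x ((codeN f a v n (δ / v i) : Finset X) : Set X) := h1.trans h2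
        calc ENNReal.ofReal (infDist (f i x) (α : Set X) ^ r)
            ≤ ENNReal.ofReal ((s i * infDist x
                ((codeN f a v n (δ / v i) : Finset X) : Set X)) ^ r) := by
              exact ENNReal.ofReal_le_ofReal (Real.rpow_le_rpow infDist_nonneg h3 hr.le)
          _ = ENNReal.ofReal (s i ^ r) * ENNReal.ofReal
                (infDist x ((codeN f a v n (δ / v i) : Finset X) : Set X) ^ r) := by
              rw [Real.mul_rpow (hs i).le infDist_nonneg,
                ENNReal.ofReal_mul (Real.rpow_nonneg (hs i).le r)]
      calc ∫⁻ x, ENNReal.ofReal (infDist x (α : Set X) ^ r) ∂ν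
          = ∑ i, ENNReal.ofReal (tw i) *
              ∫⁻ x, ENNReal.ofReal (infDist (f i x) (α : Set X) ^ r) ∂ν := by
            exact hstep _ (meas_gg (α : Set X) r hr.le)
        _ ≤ ∑ i, ENNReal.ofReal (tw i) * (ENNReal.ofReal (s i ^ r) *
              ∫⁻ x, ENNReal.ofReal
                (infDist x ((codeN f a v n (δ / v i) : Finset X) : Set X) ^ r) ∂ν) := by
            apply Finset.sum_le_sum
            intro i _
            apply mul_le_mul_right
            calc ∫⁻ x, ENNReal.ofReal (infDist (f i x) (α : Set X) ^ r) ∂ν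
                ≤ ∫⁻ x, ENNReal.ofReal (s i ^ r) * ENNReal.ofReal
                    (infDist x ((codeN f a v n (δ / v i) : Finset X) : Set X) ^ r) ∂ν :=
                  lintegral_mono (fun x => hptwise i x)
              _ = ENNReal.ofReal (s i ^ r) * ∫⁻ x, ENNReal.ofReal
                    (infDist x ((codeN f a v n (δ / v i) : Finset X) : Set X) ^ r) ∂ν :=
                  lintegral_const_mul' _ _ ENNReal.ofReal_ne_top
        _ ≤ ∑ i, ENNReal.ofReal (tw i) * (ENNReal.ofReal (s i ^ r) *
              ENNReal.ofReal (R ^ r * (δ / v i) ^ (1 - κ))) := by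
            apply Finset.sum_le_sum
            intro i _
            apply mul_le_mul_right
            apply mul_le_mul_right
            apply ih (δ / v i) (div_pos hδ (hv0 i))
            rw [lt_div_iff₀ (hv0 i)]
            calc M ^ n * v i ≤ M ^ n * M := by
                  apply mul_le_mul_of_nonneg_left (hvM i) (by positivity)
              _ = M ^ (n + 1) := by ring
              _ < δ := hfuel
        _ = ∑ i, ENNReal.ofReal (R ^ r * δ ^ (1 - κ) * v i ^ κ) := by
            apply Finset.sum_congr rfl
            intro i _
            rw [← ENNReal.ofReal_mul (Real.rpow_nonneg (hs i).le r),
              ← ENNReal.ofReal_mul (htw i).le]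
            congr 1
            have h1 : tw i * (s i ^ r * (R ^ r * (δ / v i) ^ (1 - κ)))
                = v i * (R ^ r * (δ / v i) ^ (1 - κ)) := by rw [hv]; ring
            rw [h1, Real.div_rpow hδ.le (hv0 i).le, div_eq_mul_inv,
              ← Real.rpow_neg (hv0 i).le]
            have h2 : v i * (R ^ r * (δ ^ (1 - κ) * (v i) ^ (-(1 - κ))))
                = R ^ r * δ ^ (1 - κ) * ((v i) ^ (1:ℝ) * (v i) ^ (-(1 - κ))) := by
              rw [Real.rpow_one]; ring
            rw [h2, ← Real.rpow_add (hv0 i)]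
            have h3 : (1:ℝ) + -(1 - κ) = κ := by ring
            rw [h3]
        _ = ENNReal.ofReal (R ^ r * δ ^ (1 - κ) * ∑ i, v i ^ κ) := by
            rw [← ENNReal.ofReal_sum_of_nonneg, Finset.mul_sum]
            intro i _
            have := hv0 i
            positivity
        _ = ENNReal.ofReal (R ^ r * δ ^ (1 - κ)) := by rw [hκeq, mul_one]

noncomputable def codeM {N : ℕ} (f : Fin N → X → X) (a : X) (u : Fin N → ℝ)
    (νc : ℝ → Finset X) (w : ℝ) : ℕ → ℝ → Finset X
  | 0, _ => {a}
  | n + 1, δ =>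
    if 1 < δ then {a}
    else (νc (δ ^ w)) ∪
      (Finset.univ.biUnion fun i : Fin N => (codeM f a u νc w n (δ / u i)).image (f i))

lemma codeM_nonempty {N : ℕ} (f : Fin N → X → X) (a : X) (u : Fin N → ℝ)
    (νc : ℝ → Finset X) (w : ℝ) (hνc : ∀ δ, (νc δ).Nonempty) :
    ∀ n δ, (codeM f a u νc w n δ).Nonempty := by
  intro n
  induction n with
  | zero => intro δ; exact ⟨a, by simp [codeM]⟩
  | succ n _ =>
    intro δ
    rw [codeM]
    split
    · exact ⟨a, Finset.mem_singleton_self a⟩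
    · obtain ⟨x, hx⟩ := hνc (δ ^ w)
      exact ⟨x, Finset.mem_union_left _ hx⟩

lemma codeM_card {N : ℕ} (f : Fin N → X → X) (a : X) (u : Fin N → ℝ)
    (νc : ℝ → Finset X) (w : ℝ) (hw : 0 < w)
    (κ1 κ2 c M Cν K' K₂' : ℝ) (hκ1 : 0 < κ1) (hκ2 : 0 < κ2)
    (hc : 0 < c) (hM : 0 < M)
    (huc : ∀ i, c ≤ u i) (huM : ∀ i, u i ≤ M) (hu0 : ∀ i, 0 < u i)
    (hκ2eq : ∑ i, u i ^ κ2 = 1)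
    (hνcard : ∀ δ, 0 < δ → δ ≤ 1 → ((νc δ).card : ℝ) ≤ Cν * δ ^ (-κ1))
    (hK₂' : 0 ≤ K₂')
    (hS' : Cν + K₂' ≤ K₂' * ∑ i, u i ^ (w * κ1))
    (hK' : 1 + K₂' ≤ K' * c ^ κ2) :
    ∀ n δ, 0 < δ → δ ≤ 1 / c → M ^ n < δ →
      ((codeM f a u νc w n δ).card : ℝ) ≤ K' * δ ^ (-κ2) - K₂' * δ ^ (-(w * κ1)) := by
  have hone : ∀ δ : ℝ, 1 ≤ δ → δ ≤ 1 / c →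
      (1 : ℝ) ≤ K' * δ ^ (-κ2) - K₂' * δ ^ (-(w * κ1)) := by
    intro δ hδ1 hδc
    have hδ0 : (0:ℝ) < δ := lt_of_lt_of_le one_pos hδ1
    have h1 : δ ^ (-(w * κ1)) ≤ 1 :=
      Real.rpow_le_one_of_one_le_of_nonpos hδ1 (neg_nonpos.mpr (by positivity))
    have h2 : (1/c) ^ (-κ2) ≤ δ ^ (-κ2) :=
      Real.rpow_le_rpow_of_nonpos hδ0 hδc (by linarith)
    have h3 : (1/c : ℝ) ^ (-κ2) = c ^ κ2 := by
      rw [one_div, ← Real.rpow_neg_one c, ← Real.rpow_mul hc.le]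
      norm_num
    have hcp : (0:ℝ) < c ^ κ2 := Real.rpow_pos_of_pos hc κ2
    have hK'0 : 0 ≤ K' := by nlinarith
    have h4 : K' * c ^ κ2 ≤ K' * δ ^ (-κ2) := by
      rw [← h3]; exact mul_le_mul_of_nonneg_left h2 hK'0
    nlinarith [mul_le_mul_of_nonneg_right h1 hK₂']
  intro n
  induction n with
  | zero =>
    intro δ hδ hδc hfuel
    simp only [pow_zero] at hfuel
    simp only [codeM, Finset.card_singleton, Nat.cast_one]
    exact hone δ hfuel.le hδc
  | succ n ih =>
    intro δ hδ hδc hfuel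
    rw [codeM]
    split
    · rename_i h1δ
      simpa using hone δ h1δ.le hδc
    · rename_i hnot
      push_neg at hnot
      have hδw0 : (0:ℝ) < δ ^ w := Real.rpow_pos_of_pos hδ w
      have hδw1 : δ ^ w ≤ 1 := Real.rpow_le_one hδ.le hnot hw.le
      have hBpos : (0:ℝ) < δ ^ (-(w * κ1)) := Real.rpow_pos_of_pos hδ _
      calc ((νc (δ ^ w) ∪ Finset.univ.biUnion
              (fun i : Fin N => (codeM f a u νc w n (δ / u i)).image (f i))).card : ℝ)
          ≤ ((νc (δ ^ w)).card : ℝ) + ((Finset.univ.biUnion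
              (fun i : Fin N => (codeM f a u νc w n (δ / u i)).image (f i))).card : ℝ) := by
            exact_mod_cast Nat.cast_le.mpr (Finset.card_union_le _ _)
        _ ≤ Cν * δ ^ (-(w * κ1)) + ∑ i : Fin N, ((codeM f a u νc w n (δ / u i)).card : ℝ) := by
            apply add_le_add
            · have hcc := hνcard (δ ^ w) hδw0 hδw1
              have heq : (δ ^ w) ^ (-κ1) = δ ^ (-(w * κ1)) := by
                rw [← Real.rpow_mul hδ.le, mul_neg]
              rwa [heq] at hcc
            · calc ((Finset.univ.biUnion
                  (fun i : Fin N => (codeM f a u νc w n (δ / u i)).image (f i))).card : ℝ)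
                  ≤ ∑ i : Fin N, (((codeM f a u νc w n (δ / u i)).image (f i)).card : ℝ) := by
                    exact_mod_cast Nat.cast_le.mpr (Finset.card_biUnion_le)
                _ ≤ ∑ i : Fin N, ((codeM f a u νc w n (δ / u i)).card : ℝ) := by
                    apply Finset.sum_le_sum
                    intro i _
                    exact_mod_cast Finset.card_image_le
        _ ≤ Cν * δ ^ (-(w * κ1)) + ∑ i : Fin N,
              (K' * (δ / u i) ^ (-κ2) - K₂' * (δ / u i) ^ (-(w * κ1))) := by
            apply add_le_add_right
            apply Finset.sum_le_sum
            intro i _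
            apply ih
            · exact div_pos hδ (hu0 i)
            · exact div_le_div₀ zero_le_one hnot hc (huc i)
            · rw [lt_div_iff₀ (hu0 i)]
              calc M ^ n * u i ≤ M ^ n * M := by
                    apply mul_le_mul_of_nonneg_left (huM i) (by positivity)
                _ = M ^ (n + 1) := by ring
                _ < δ := hfuel
        _ = Cν * δ ^ (-(w * κ1)) + (K' * δ ^ (-κ2) * ∑ i : Fin N, u i ^ κ2
              - K₂' * δ ^ (-(w * κ1)) * ∑ i : Fin N, u i ^ (w * κ1)) := by
            congr 1
            rw [Finset.sum_sub_distrib, Finset.mul_sum, Finset.mul_sum]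
            congr 1
            · apply Finset.sum_congr rfl; intro i _
              rw [Real.div_rpow hδ.le (hu0 i).le, Real.rpow_neg (hu0 i).le,
                div_eq_mul_inv, inv_inv, mul_assoc]
            · apply Finset.sum_congr rfl; intro i _
              rw [Real.div_rpow hδ.le (hu0 i).le, Real.rpow_neg (hu0 i).le,
                div_eq_mul_inv, inv_inv, mul_assoc]
        _ ≤ K' * δ ^ (-κ2) - K₂' * δ ^ (-(w * κ1)) := by
            rw [hκ2eq, mul_one]
            nlinarith [mul_le_mul_of_nonneg_right hS' hBpos.le]

lemma codeM_err {N : ℕ} [NeZero N] [MeasurableSpace X] [BorelSpace X]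
    (μ ν : Measure X) [IsProbabilityMeasure μ] [IsProbabilityMeasure ν]
    (f : Fin N → X → X) (s pp : Fin N → ℝ) (r : ℝ) (hr : 0 < r)
    (hs : ∀ i, 0 < s i)
    (hsim : ∀ i x y, dist (f i x) (f i y) = s i * dist x y)
    (hpp : ∀ i, 0 < pp i) (p0 : ℝ) (hp0 : 0 < p0)
    (hstep : ∀ g : X → ℝ≥0∞, Measurable g →
      ∫⁻ x, g x ∂μ = ENNReal.ofReal p0 * ∫⁻ x, g x ∂ν
        + ∑ i, ENNReal.ofReal (pp i) * ∫⁻ x, g (f i x) ∂μ)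
    (a : X) (R : ℝ) (hR : 0 < R) (hsupp : ∀ᵐ x ∂μ, dist x a ≤ R)
    (νc : ℝ → Finset X) (hνc : ∀ δ, (νc δ).Nonempty)
    (κ1 κ2 w c M K K₂ : ℝ)
    (hκ10 : 0 < κ1) (hκ11 : κ1 < 1) (hκ20 : 0 < κ2) (hκ21 : κ2 < 1)
    (hw : 0 < w) (hc : 0 < c) (hM : 0 < M)
    (huc : ∀ i, c ≤ pp i * s i ^ r) (huM : ∀ i, pp i * s i ^ r ≤ M)
    (hκ2eq : ∑ i, (pp i * s i ^ r) ^ κ2 = 1)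
    (hνerr : ∀ δ, 0 < δ → δ ≤ 1 →
      ∫⁻ x, ENNReal.ofReal (infDist x ((νc δ : Finset X) : Set X) ^ r) ∂ν
        ≤ ENNReal.ofReal (R ^ r * δ ^ (1 - κ1)))
    (hK₂ : 0 ≤ K₂)
    (he : 1 - κ2 < w * (1 - κ1))
    (hKK : p0 * R ^ r + K₂ ≤ K₂ * ∑ i, (pp i * s i ^ r) ^ (1 - w * (1 - κ1)))
    (hKbase : R ^ r + K₂ * (1 / c) ^ (w * (1 - κ1)) ≤ K)
    (hKc : K₂ * (1 / c) ^ (w * (1 - κ1) - (1 - κ2)) ≤ K) :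
    ∀ n δ, 0 < δ → δ ≤ 1 / c → M ^ n < δ →
      ∫⁻ x, ENNReal.ofReal
        (infDist x ((codeM f a (fun i => pp i * s i ^ r) νc w n δ : Finset X) : Set X) ^ r) ∂μ
        ≤ ENNReal.ofReal (K * δ ^ (1 - κ2) - K₂ * δ ^ (w * (1 - κ1))) := by
  set u : Fin N → ℝ := fun i => pp i * s i ^ r with hu
  have hu0 : ∀ i, 0 < u i := fun i => by
    have := hs i; have := hpp i
    have : (0:ℝ) < s i ^ r := Real.rpow_pos_of_pos (hs i) r
    positivity
  set e : ℝ := w * (1 - κ1) with hee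
  have he0 : 0 < e := by
    have : 0 < 1 - κ1 := by linarith
    positivity
  have hcinv : (0:ℝ) < 1 / c := by positivity
  have hK0 : 0 ≤ K := by
    have h1 : (0:ℝ) ≤ K₂ * (1 / c) ^ e := by positivity
    nlinarith [Real.rpow_nonneg hR.le r]
  -- Φ is nonnegative on the relevant domain
  have hΦpos : ∀ y : ℝ, 0 < y → y ≤ 1 / c → 0 ≤ K * y ^ (1 - κ2) - K₂ * y ^ e := by
    intro y hy0 hyc
    have h1 : y ^ e = y ^ (1 - κ2) * y ^ (e - (1 - κ2)) := by
      rw [← Real.rpow_add hy0]; ring_nf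
    have h2 : y ^ (e - (1 - κ2)) ≤ (1/c) ^ (e - (1 - κ2)) :=
      Real.rpow_le_rpow hy0.le hyc (by linarith)
    have h3 : (0:ℝ) < y ^ (1 - κ2) := Real.rpow_pos_of_pos hy0 _
    have h4 : K₂ * y ^ e ≤ K₂ * (1/c) ^ (e - (1 - κ2)) * y ^ (1 - κ2) := by
      rw [h1]
      calc K₂ * (y ^ (1 - κ2) * y ^ (e - (1 - κ2)))
          = (K₂ * y ^ (e - (1 - κ2))) * y ^ (1 - κ2) := by ring
        _ ≤ (K₂ * (1/c) ^ (e - (1 - κ2))) * y ^ (1 - κ2) := by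
            apply mul_le_mul_of_nonneg_right _ h3.le
            exact mul_le_mul_of_nonneg_left h2 hK₂
    nlinarith [mul_le_mul_of_nonneg_right hKc h3.le]
  have hbase : ∀ δ : ℝ, 1 ≤ δ → δ ≤ 1 / c →
      ∫⁻ x, ENNReal.ofReal (infDist x (({a} : Finset X) : Set X) ^ r) ∂μ
        ≤ ENNReal.ofReal (K * δ ^ (1 - κ2) - K₂ * δ ^ e) := by
    intro δ hδ1 hδc
    refine (err_singleton μ a R r hR.le hr.le hsupp).trans (ENNReal.ofReal_le_ofReal ?_)
    have h1 : (1:ℝ) ≤ δ ^ (1 - κ2) := Real.one_le_rpow hδ1 (by linarith)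
    have h2 : δ ^ e ≤ (1/c) ^ e := Real.rpow_le_rpow (by linarith) hδc he0.le
    nlinarith [mul_le_mul_of_nonneg_left h2 hK₂]
  intro n
  induction n with
  | zero =>
    intro δ hδ hδc hfuel
    simp only [pow_zero] at hfuel
    show ∫⁻ x, ENNReal.ofReal (infDist x (({a} : Finset X) : Set X) ^ r) ∂μ ≤ _
    exact hbase δ hfuel.le hδc
  | succ n ih =>
    intro δ hδ hδc hfuel
    rw [codeM]
    split
    · rename_i h1δ
      exact hbase δ h1δ.le hδc
    · rename_i hnot
      push_neg at hnot
      have hδw0 : (0:ℝ) < δ ^ w := Real.rpow_pos_of_pos hδ w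
      have hδw1 : δ ^ w ≤ 1 := Real.rpow_le_one hδ.le hnot hw.le
      set α : Finset X := νc (δ ^ w) ∪ (Finset.univ.biUnion
        (fun i : Fin N => (codeM f a u νc w n (δ / u i)).image (f i))) with hα
      -- pointwise bound for the ν part
      have hν1 : ∫⁻ x, ENNReal.ofReal (infDist x (α : Set X) ^ r) ∂ν
          ≤ ENNReal.ofReal (R ^ r * (δ ^ w) ^ (1 - κ1)) := by
        refine le_trans (lintegral_mono (fun x => ?_)) (hνerr (δ ^ w) hδw0 hδw1)
        apply ENNReal.ofReal_le_ofReal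
        apply Real.rpow_le_rpow infDist_nonneg _ hr.le
        apply infDist_le_infDist_of_subset _ (by exact_mod_cast hνc (δ ^ w))
        exact_mod_cast Finset.coe_subset.mpr (Finset.subset_union_left)
      -- pointwise bound for the μ parts
      have hptwise : ∀ (i : Fin N) (x : X),
          ENNReal.ofReal (infDist (f i x) (α : Set X) ^ r)
            ≤ ENNReal.ofReal (s i ^ r) * ENNReal.ofReal
              (infDist x ((codeM f a u νc w n (δ / u i) : Finset X) : Set X) ^ r) := by
        intro i x
        have hne := codeM_nonempty f a u νc w hνc n (δ / u i)
        have hsub : ((codeM f a u νc w n (δ / u i)).image (f i) : Set X) ⊆ (α : Set X) := by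
          apply Finset.coe_subset.mpr
          refine le_trans ?_ Finset.subset_union_right
          exact Finset.subset_biUnion_of_mem
            (fun j : Fin N => (codeM f a u νc w n (δ / u j)).image (f j)) (Finset.mem_univ i)
        have h1 : infDist (f i x) (α : Set X)
            ≤ infDist (f i x) (((codeM f a u νc w n (δ / u i)).image (f i) : Finset X) : Set X) :=
          infDist_le_infDist_of_subset hsub (by simpa using hne.image (f i))
        have h2 := infDist_image_le (hs i).le (hsim i) _ hne x
        have h3 := h1.trans h2
        calc ENNReal.ofReal (infDist (f i x) (α : Set X) ^ r)
            ≤ ENNReal.ofReal ((s i * infDist x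
                ((codeM f a u νc w n (δ / u i) : Finset X) : Set X)) ^ r) := by
              exact ENNReal.ofReal_le_ofReal (Real.rpow_le_rpow infDist_nonneg h3 hr.le)
          _ = _ := by
              rw [Real.mul_rpow (hs i).le infDist_nonneg,
                ENNReal.ofReal_mul (Real.rpow_nonneg (hs i).le r)]
      calc ∫⁻ x, ENNReal.ofReal (infDist x (α : Set X) ^ r) ∂μ
          = ENNReal.ofReal p0 * ∫⁻ x, ENNReal.ofReal (infDist x (α : Set X) ^ r) ∂ν
            + ∑ i, ENNReal.ofReal (pp i) *
              ∫⁻ x, ENNReal.ofReal (infDist (f i x) (α : Set X) ^ r) ∂μ := by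
            exact hstep _ (meas_gg (α : Set X) r hr.le)
        _ ≤ ENNReal.ofReal p0 * ENNReal.ofReal (R ^ r * (δ ^ w) ^ (1 - κ1))
            + ∑ i, ENNReal.ofReal (pp i) * (ENNReal.ofReal (s i ^ r) *
              ENNReal.ofReal (K * (δ / u i) ^ (1 - κ2) - K₂ * (δ / u i) ^ e)) := by
            apply add_le_add
            · exact mul_le_mul_right hν1 _
            · apply Finset.sum_le_sum
              intro i _
              apply mul_le_mul_right
              calc ∫⁻ x, ENNReal.ofReal (infDist (f i x) (α : Set X) ^ r) ∂μ
                  ≤ ∫⁻ x, ENNReal.ofReal (s i ^ r) * ENNReal.ofReal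
                      (infDist x ((codeM f a u νc w n (δ / u i) : Finset X) : Set X) ^ r) ∂μ :=
                    lintegral_mono (fun x => hptwise i x)
                _ = ENNReal.ofReal (s i ^ r) * ∫⁻ x, ENNReal.ofReal
                      (infDist x ((codeM f a u νc w n (δ / u i) : Finset X) : Set X) ^ r) ∂μ :=
                    lintegral_const_mul' _ _ ENNReal.ofReal_ne_top
                _ ≤ ENNReal.ofReal (s i ^ r) *
                      ENNReal.ofReal (K * (δ / u i) ^ (1 - κ2) - K₂ * (δ / u i) ^ e) := by
                    apply mul_le_mul_right
                    apply ih (δ / u i) (div_pos hδ (hu0 i))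
                      (div_le_div₀ zero_le_one hnot hc (huc i))
                    rw [lt_div_iff₀ (hu0 i)]
                    calc M ^ n * u i ≤ M ^ n * M := by
                          apply mul_le_mul_of_nonneg_left (huM i) (by positivity)
                      _ = M ^ (n + 1) := by ring
                      _ < δ := hfuel
        _ = ENNReal.ofReal (p0 * (R ^ r * (δ ^ w) ^ (1 - κ1)))
            + ∑ i, ENNReal.ofReal (u i * (K * (δ / u i) ^ (1 - κ2) - K₂ * (δ / u i) ^ e)) := by
            congr 1
            · rw [ENNReal.ofReal_mul hp0.le]
            · apply Finset.sum_congr rfl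
              intro i _
              rw [← ENNReal.ofReal_mul (Real.rpow_nonneg (hs i).le r),
                ← ENNReal.ofReal_mul (hpp i).le, ← mul_assoc]
        _ ≤ ENNReal.ofReal (K * δ ^ (1 - κ2) - K₂ * δ ^ e) := by
            have hnn : ∀ i ∈ Finset.univ,
                0 ≤ u i * (K * (δ / u i) ^ (1 - κ2) - K₂ * (δ / u i) ^ e) := by
              intro i _
              apply mul_nonneg (hu0 i).le
              exact hΦpos (δ / u i) (div_pos hδ (hu0 i))
                (div_le_div₀ zero_le_one hnot hc (huc i))
            rw [← ENNReal.ofReal_sum_of_nonneg hnn,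
              ← ENNReal.ofReal_add (by positivity) (Finset.sum_nonneg hnn)]
            apply ENNReal.ofReal_le_ofReal
            -- now pure real arithmetic
            have hpow : ∀ (i : Fin N) (y : ℝ), u i * (δ / u i) ^ y = δ ^ y * u i ^ (1 - y) := by
              intro i y
              rw [Real.div_rpow hδ.le (hu0 i).le]
              have h1 : u i * (δ ^ y / u i ^ y) = δ ^ y * (u i ^ (1:ℝ) / u i ^ y) := by
                rw [Real.rpow_one]; ring
              rw [h1, ← Real.rpow_sub (hu0 i)]
            have hsummand : ∀ i : Fin N,
                u i * (K * (δ / u i) ^ (1 - κ2) - K₂ * (δ / u i) ^ e)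
                = K * (δ ^ (1 - κ2) * u i ^ (1 - (1 - κ2))) - K₂ * (δ ^ e * u i ^ (1 - e)) := by
              intro i
              rw [← hpow i (1 - κ2), ← hpow i e]; ring
            have hsum2 : ∑ i, u i * (K * (δ / u i) ^ (1 - κ2) - K₂ * (δ / u i) ^ e)
                = K * δ ^ (1 - κ2) * (∑ i, u i ^ (1 - (1 - κ2)))
                  - K₂ * δ ^ e * (∑ i, u i ^ (1 - e)) := by
              rw [Finset.sum_congr rfl (fun i _ => hsummand i), Finset.sum_sub_distrib]
              congr 1
              · rw [Finset.mul_sum]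
                exact Finset.sum_congr rfl (fun i _ => by ring)
              · rw [Finset.mul_sum]
                exact Finset.sum_congr rfl (fun i _ => by ring)
            have hκ2' : (∑ i, u i ^ (1 - (1 - κ2))) = 1 := by
              rw [show (1 - (1 - κ2)) = κ2 by ring]
              exact hκ2eq
            rw [hsum2, hκ2', mul_one]
            have hδe : (δ ^ w) ^ (1 - κ1) = δ ^ e := by
              rw [← Real.rpow_mul hδ.le]
            have hδepos : (0:ℝ) < δ ^ e := Real.rpow_pos_of_pos hδ e
            rw [hδe]
            nlinarith [mul_le_mul_of_nonneg_right hKK hδepos.le]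

end ZhuAux

open ZhuAux


set_option maxHeartbeats 1000000 in
theorem finite_upper_quantization_coefficient_case_i
    (q N : ℕ) (hN : 2 ≤ N)
    (f : Fin N → EuclideanSpace ℝ (Fin q) → EuclideanSpace ℝ (Fin q))
    (s : Fin N → ℝ) (hs : ∀ i, s i ∈ Set.Ioo (0 : ℝ) 1)
    (hsim : ∀ i x y, dist (f i x) (f i y) = s i * dist x y)
    (hOSC : ∃ U : Set (EuclideanSpace ℝ (Fin q)), U.Nonempty ∧ IsOpen U ∧
      Bornology.IsBounded U ∧ (∀ i j, i ≠ j → Disjoint (f i '' U) (f j '' U)) ∧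
      (⋃ i, f i '' U) ⊆ U)
    (E : Set (EuclideanSpace ℝ (Fin q))) (hEc : IsCompact E) (hEne : E.Nonempty)
    (hE : E = ⋃ i, f i '' E) (hdiam : Metric.diam E = 1)
    (t : Fin N → ℝ) (ht : ∀ i, 0 < t i) (htsum : ∑ i, t i = 1)
    (ν : Measure (EuclideanSpace ℝ (Fin q))) [IsProbabilityMeasure ν]
    (hν : ν = ∑ i, ENNReal.ofReal (t i) • ν.map (f i))
    (p0 : ℝ) (p : Fin N → ℝ) (hp0 : 0 < p0) (hp : ∀ i, 0 < p i)
    (hpsum : p0 + ∑ i, p i = 1)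
    (μ : Measure (EuclideanSpace ℝ (Fin q))) [IsProbabilityMeasure μ]
    (hμ : μ = ENNReal.ofReal p0 • ν + ∑ i, ENNReal.ofReal (p i) • μ.map (f i))
    (r : ℝ) (hr : 0 < r)
    (ξ1 ξ2 : ℝ) (hξ1 : 0 < ξ1) (hξ1eq : ∑ i, (t i * s i ^ r) ^ (ξ1 / (ξ1 + r)) = 1)
    (hξ2 : 0 < ξ2) (hξ2eq : ∑ i, (p i * s i ^ r) ^ (ξ2 / (ξ2 + r)) = 1)
    (hlt : ξ1 < ξ2)
    :
    Filter.limsup (fun n : ℕ =>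
        ENNReal.ofReal ((n : ℝ) ^ (r / max ξ1 ξ2) * quantErr μ r n ^ r)) Filter.atTop
      < ⊤ := by
  classical
  haveI hNz : NeZero N := ⟨by omega⟩
  letI : DecidableEq (EuclideanSpace ℝ (Fin q)) := Classical.decEq _
  rw [max_eq_right hlt.le]
  -- basic facts
  have hs0 : ∀ i, 0 < s i := fun i => (hs i).1
  have hs1 : ∀ i, s i < 1 := fun i => (hs i).2
  have hsr : ∀ i, 0 < s i ^ r := fun i => Real.rpow_pos_of_pos (hs0 i) r
  have hsr1 : ∀ i, s i ^ r < 1 := fun i => Real.rpow_lt_one (hs0 i).le (hs1 i) hr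
  have hfc : ∀ i, Continuous (f i) := by
    intro i
    apply LipschitzWith.continuous (K := Real.toNNReal (s i))
    apply LipschitzWith.of_dist_le_mul
    intro x y
    rw [hsim i x y, Real.coe_toNNReal _ (hs0 i).le]
  have hfm : ∀ i, Measurable (f i) := fun i => (hfc i).measurable
  -- lintegral step identities
  have hstepν : ∀ g : EuclideanSpace ℝ (Fin q) → ENNReal, Measurable g →
      ∫⁻ x, g x ∂ν = ∑ i, ENNReal.ofReal (t i) * ∫⁻ x, g (f i x) ∂ν := by
    intro g hg
    conv_lhs => rw [hν]
    rw [lintegral_finset_sum_measure]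
    exact Finset.sum_congr rfl fun i _ => by
      rw [lintegral_smul_measure, lintegral_map hg (hfm i), smul_eq_mul]
  have hstepμ : ∀ g : EuclideanSpace ℝ (Fin q) → ENNReal, Measurable g →
      ∫⁻ x, g x ∂μ = ENNReal.ofReal p0 * ∫⁻ x, g x ∂ν
        + ∑ i, ENNReal.ofReal (p i) * ∫⁻ x, g (f i x) ∂μ := by
    intro g hg
    conv_lhs => rw [hμ]
    rw [lintegral_add_measure, lintegral_smul_measure, lintegral_finset_sum_measure]
    congr 1
    exact Finset.sum_congr rfl fun i _ => by
      rw [lintegral_smul_measure, lintegral_map hg (hfm i), smul_eq_mul]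
  -- set-level identities
  have hsetν : ∀ A : Set (EuclideanSpace ℝ (Fin q)), MeasurableSet A →
      ν A = ∑ i, ENNReal.ofReal (t i) * ν (f i ⁻¹' A) := by
    intro A hA
    conv_lhs => rw [hν]
    rw [Measure.finset_sum_apply]
    exact Finset.sum_congr rfl fun i _ => by
      rw [Measure.smul_apply, Measure.map_apply (hfm i) hA, smul_eq_mul]
  have hsetμ : ∀ A : Set (EuclideanSpace ℝ (Fin q)), MeasurableSet A →
      μ A = ENNReal.ofReal p0 * ν A + ∑ i, ENNReal.ofReal (p i) * μ (f i ⁻¹' A) := by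
    intro A hA
    conv_lhs => rw [hμ]
    rw [Measure.add_apply, Measure.smul_apply, smul_eq_mul, Measure.finset_sum_apply]
    congr 1
    exact Finset.sum_congr rfl fun i _ => by
      rw [Measure.smul_apply, Measure.map_apply (hfm i) hA, smul_eq_mul]
  -- the common support ball
  obtain ⟨a⟩ : Nonempty (EuclideanSpace ℝ (Fin q)) := ⟨0⟩
  obtain ⟨B, hBd, hB1⟩ : ∃ B : ℝ, (∀ i, dist (f i a) a ≤ B) ∧ 1 ≤ B := by
    refine ⟨1 + Finset.univ.sup' Finset.univ_nonempty (fun i => dist (f i a) a), ?_, ?_⟩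
    · intro i
      have := Finset.le_sup' (fun i => dist (f i a) a) (Finset.mem_univ i)
      linarith
    · have := Finset.le_sup' (fun i => dist (f i a) a) (Finset.mem_univ (0 : Fin N))
      have h0 : (0:ℝ) ≤ dist (f 0 a) a := dist_nonneg
      linarith
  obtain ⟨sm, hsm0, hsm1, hsmi⟩ : ∃ sm : ℝ, 0 < sm ∧ sm < 1 ∧ ∀ i, s i ≤ sm := by
    refine ⟨Finset.univ.sup' Finset.univ_nonempty s, ?_, ?_, ?_⟩
    · exact lt_of_lt_of_le (hs0 0) (Finset.le_sup' s (Finset.mem_univ (0 : Fin N)))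
    · exact (Finset.sup'_lt_iff Finset.univ_nonempty).mpr (fun i _ => hs1 i)
    · exact fun i => Finset.le_sup' s (Finset.mem_univ i)
  obtain ⟨R0, hR01, hψ⟩ : ∃ R0 : ℝ, 1 ≤ R0 ∧ ∀ R, R0 ≤ R → R + 1 ≤ (R - B) / sm := by
    refine ⟨max 1 ((B + sm) / (1 - sm)), le_max_left _ _, ?_⟩
    intro R hR
    rw [le_div_iff₀ hsm0]
    have h2 : (B + sm) / (1 - sm) ≤ R := le_trans (le_max_right _ _) hR
    rw [div_le_iff₀ (by linarith)] at h2
    nlinarith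
  have hball : ∀ (i : Fin N) (R : ℝ), R0 ≤ R →
      closedBall a ((R - B) / sm) ⊆ f i ⁻¹' (closedBall a R) := by
    intro i R hR x hx
    simp only [mem_closedBall, mem_preimage] at *
    calc dist (f i x) a ≤ dist (f i x) (f i a) + dist (f i a) a := dist_triangle _ _ _
      _ = s i * dist x a + dist (f i a) a := by rw [hsim]
      _ ≤ sm * ((R - B) / sm) + B := by
          have h1 : s i * dist x a ≤ sm * dist x a :=
            mul_le_mul_of_nonneg_right (hsmi i) dist_nonneg
          have h2 : sm * dist x a ≤ sm * ((R - B) / sm) :=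
            mul_le_mul_of_nonneg_left hx hsm0.le
          linarith [hBd i]
      _ = R := by field_simp; ring
  -- escape of ν vanishes
  have hν0 : ∀ R : ℝ, R0 ≤ R → ν ((closedBall a R)ᶜ) = 0 := by
    have key : ν ((closedBall a R0)ᶜ) = 0 := by
      apply vanish_of_step ν a R0
      intro R hR
      rw [hsetν _ measurableSet_closedBall.compl]
      have hsub : ∀ i : Fin N, f i ⁻¹' (closedBall a R)ᶜ ⊆ (closedBall a (R+1))ᶜ := by
        intro i
        rw [preimage_compl]
        apply compl_subset_compl.mpr
        exact subset_trans (closedBall_subset_closedBall (hψ R hR)) (hball i R hR)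
      calc ∑ i, ENNReal.ofReal (t i) * ν (f i ⁻¹' (closedBall a R)ᶜ)
          ≤ ∑ i, ENNReal.ofReal (t i) * ν ((closedBall a (R+1))ᶜ) := by
            apply Finset.sum_le_sum
            intro i _
            exact mul_le_mul_right (measure_mono (hsub i)) _
        _ = ν ((closedBall a (R+1))ᶜ) := by
            rw [← Finset.sum_mul, ← ENNReal.ofReal_sum_of_nonneg (fun i _ => (ht i).le),
              htsum, ENNReal.ofReal_one, one_mul]
    intro R hR
    refine le_antisymm ?_ zero_le
    rw [← key]
    apply measure_mono
    exact compl_subset_compl.mpr (closedBall_subset_closedBall hR)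
  -- escape of μ vanishes
  have hμ0 : μ ((closedBall a R0)ᶜ) = 0 := by
    apply vanish_of_step μ a R0
    intro R hR
    rw [hsetμ _ measurableSet_closedBall.compl, hν0 R hR, mul_zero, zero_add]
    have hsub : ∀ i : Fin N, f i ⁻¹' (closedBall a R)ᶜ ⊆ (closedBall a (R+1))ᶜ := by
      intro i
      rw [preimage_compl]
      apply compl_subset_compl.mpr
      exact subset_trans (closedBall_subset_closedBall (hψ R hR)) (hball i R hR)
    calc ∑ i, ENNReal.ofReal (p i) * μ (f i ⁻¹' (closedBall a R)ᶜ)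
        ≤ ∑ i, ENNReal.ofReal (p i) * μ ((closedBall a (R+1))ᶜ) := by
          apply Finset.sum_le_sum
          intro i _
          exact mul_le_mul_right (measure_mono (hsub i)) _
      _ = ENNReal.ofReal (1 - p0) * μ ((closedBall a (R+1))ᶜ) := by
          rw [← Finset.sum_mul, ← ENNReal.ofReal_sum_of_nonneg (fun i _ => (hp i).le)]
          congr 2
          linarith
      _ ≤ 1 * μ ((closedBall a (R+1))ᶜ) := by
          apply mul_le_mul_left
          calc ENNReal.ofReal (1 - p0) ≤ ENNReal.ofReal 1 :=
                ENNReal.ofReal_le_ofReal (by linarith)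
            _ = 1 := ENNReal.ofReal_one
      _ = μ ((closedBall a (R+1))ᶜ) := one_mul _
  have hR0pos : (0:ℝ) < R0 := lt_of_lt_of_le one_pos hR01
  have hsuppν : ∀ᵐ x ∂ν, dist x a ≤ R0 := by
    rw [ae_iff]
    convert hν0 R0 le_rfl using 2
    rfl
  have hsuppμ : ∀ᵐ x ∂μ, dist x a ≤ R0 := by
    rw [ae_iff]
    convert hμ0 using 2
    rfl
  -- exponents
  obtain ⟨κ1, hκ1def⟩ : ∃ x : ℝ, x = ξ1 / (ξ1 + r) := ⟨_, rfl⟩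
  obtain ⟨κ2, hκ2def⟩ : ∃ x : ℝ, x = ξ2 / (ξ2 + r) := ⟨_, rfl⟩
  rw [← hκ1def] at hξ1eq
  rw [← hκ2def] at hξ2eq
  have hr1 : 0 < ξ1 + r := by linarith
  have hr2 : 0 < ξ2 + r := by linarith
  have hκ10 : 0 < κ1 := by rw [hκ1def]; positivity
  have hκ11 : κ1 < 1 := by rw [hκ1def, div_lt_one hr1]; linarith
  have hκ20 : 0 < κ2 := by rw [hκ2def]; positivity
  have hκ21 : κ2 < 1 := by rw [hκ2def, div_lt_one hr2]; linarith
  have hκ12 : κ1 < κ2 := by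
    rw [hκ1def, hκ2def, div_lt_div_iff₀ hr1 hr2]
    nlinarith
  obtain ⟨w, hw0, hwe, hwκ⟩ : ∃ w : ℝ, 0 < w ∧ 1 - κ2 < w * (1 - κ1) ∧ w * κ1 < κ2 := by
    have h1 : (1 - κ2) / (1 - κ1) < κ2 / κ1 := by
      rw [div_lt_div_iff₀ (by linarith) hκ10]
      nlinarith
    have h2 : (0:ℝ) ≤ (1 - κ2) / (1 - κ1) := by
      apply div_nonneg <;> linarith
    have h3 : (0:ℝ) < 1 - κ1 := by linarith
    have e1 : (1 - κ2)/(1 - κ1) * (1 - κ1) = 1 - κ2 := div_mul_cancel₀ _ h3.ne'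
    have e2 : κ2/κ1 * κ1 = κ2 := div_mul_cancel₀ _ hκ10.ne'
    refine ⟨((1 - κ2) / (1 - κ1) + κ2 / κ1) / 2,
      by linarith [div_pos hκ20 hκ10], ?_, ?_⟩
    · nlinarith [mul_lt_mul_of_pos_right h1 h3]
    · nlinarith [mul_lt_mul_of_pos_right h1 hκ10]
  -- weight bounds
  have ht1 : ∀ i, t i ≤ 1 := by
    intro i
    rw [← htsum]
    exact Finset.single_le_sum (fun j _ => (ht j).le) (Finset.mem_univ i)
  have hp1 : ∀ i, p i < 1 := by
    intro i
    have := Finset.single_le_sum (fun j _ => (hp j).le) (Finset.mem_univ i)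
    linarith
  have hv0 : ∀ i, 0 < t i * s i ^ r := fun i => mul_pos (ht i) (hsr i)
  have hv1 : ∀ i, t i * s i ^ r < 1 := by
    intro i
    calc t i * s i ^ r ≤ 1 * s i ^ r :=
          mul_le_mul_of_nonneg_right (ht1 i) (hsr i).le
      _ = s i ^ r := one_mul _
      _ < 1 := hsr1 i
  have hu0 : ∀ i, 0 < p i * s i ^ r := fun i => mul_pos (hp i) (hsr i)
  have hu1 : ∀ i, p i * s i ^ r < 1 := by
    intro i
    calc p i * s i ^ r ≤ 1 * s i ^ r :=
          mul_le_mul_of_nonneg_right (hp1 i).le (hsr i).le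
      _ = s i ^ r := one_mul _
      _ < 1 := hsr1 i
  -- min/max of the weights
  obtain ⟨cv, hcv0, hcv1, hcvle⟩ : ∃ cv : ℝ, 0 < cv ∧ cv ≤ 1 ∧ ∀ i, cv ≤ t i * s i ^ r := by
    refine ⟨Finset.univ.inf' Finset.univ_nonempty (fun i => t i * s i ^ r), ?_, ?_, ?_⟩
    · exact (Finset.lt_inf'_iff _).mpr (fun i _ => hv0 i)
    · exact le_trans (Finset.inf'_le (fun i => t i * s i ^ r)
        (Finset.mem_univ (0 : Fin N))) (hv1 0).le
    · exact fun i => Finset.inf'_le (fun i => t i * s i ^ r) (Finset.mem_univ i)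
  obtain ⟨Mv, hMv0, hMv1, hMvge⟩ : ∃ Mv : ℝ, 0 < Mv ∧ Mv < 1 ∧ ∀ i, t i * s i ^ r ≤ Mv := by
    refine ⟨Finset.univ.sup' Finset.univ_nonempty (fun i => t i * s i ^ r), ?_, ?_, ?_⟩
    · exact lt_of_lt_of_le (hv0 0) (Finset.le_sup' (fun i => t i * s i ^ r)
        (Finset.mem_univ (0 : Fin N)))
    · exact (Finset.sup'_lt_iff Finset.univ_nonempty).mpr (fun i _ => hv1 i)
    · exact fun i => Finset.le_sup' (fun i => t i * s i ^ r) (Finset.mem_univ i)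
  obtain ⟨cu, hcu0, hcu1, hcule⟩ : ∃ cu : ℝ, 0 < cu ∧ cu ≤ 1 ∧ ∀ i, cu ≤ p i * s i ^ r := by
    refine ⟨Finset.univ.inf' Finset.univ_nonempty (fun i => p i * s i ^ r), ?_, ?_, ?_⟩
    · exact (Finset.lt_inf'_iff _).mpr (fun i _ => hu0 i)
    · exact le_trans (Finset.inf'_le (fun i => p i * s i ^ r)
        (Finset.mem_univ (0 : Fin N))) (hu1 0).le
    · exact fun i => Finset.inf'_le (fun i => p i * s i ^ r) (Finset.mem_univ i)
  obtain ⟨Mu, hMu0, hMu1, hMuge⟩ : ∃ Mu : ℝ, 0 < Mu ∧ Mu < 1 ∧ ∀ i, p i * s i ^ r ≤ Mu := by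
    refine ⟨Finset.univ.sup' Finset.univ_nonempty (fun i => p i * s i ^ r), ?_, ?_, ?_⟩
    · exact lt_of_lt_of_le (hu0 0) (Finset.le_sup' (fun i => p i * s i ^ r)
        (Finset.mem_univ (0 : Fin N)))
    · exact (Finset.sup'_lt_iff Finset.univ_nonempty).mpr (fun i _ => hu1 i)
    · exact fun i => Finset.le_sup' (fun i => p i * s i ^ r) (Finset.mem_univ i)
  -- the codebooks for ν
  obtain ⟨νc, hνne, hνcard, hνerr⟩ :
      ∃ νc : ℝ → Finset (EuclideanSpace ℝ (Fin q)),
        (∀ δ, (νc δ).Nonempty) ∧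
        (∀ δ, 0 < δ → δ ≤ 1 → ((νc δ).card : ℝ) ≤ cv ^ (-κ1) * δ ^ (-κ1)) ∧
        (∀ δ, 0 < δ → δ ≤ 1 →
          ∫⁻ x, ENNReal.ofReal (infDist x ((νc δ : Finset (EuclideanSpace ℝ (Fin q))) :
            Set (EuclideanSpace ℝ (Fin q))) ^ r) ∂ν
            ≤ ENNReal.ofReal (R0 ^ r * δ ^ (1 - κ1))) := by
    refine ⟨fun δ => codeN f a (fun i => t i * s i ^ r) (fuel Mv δ) δ,
      fun δ => codeN_nonempty f a (fun i => t i * s i ^ r) (fuel Mv δ) δ, ?_, ?_⟩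
    · intro δ h0 h1
      have h2 : δ ≤ 1 / cv := le_trans h1 ((le_div_iff₀ hcv0).mpr (by nlinarith))
      have h3 := codeN_card f a (fun i => t i * s i ^ r) κ1 cv Mv hκ10 hcv0 hMv0
        hcvle hMvge hv0 hξ1eq (fuel Mv δ) δ h0 h2 (fuel_spec hMv0 hMv1 h0)
      rwa [Real.mul_rpow hcv0.le h0.le] at h3
    · intro δ h0 _
      exact codeN_err ν f s t r hr hs0 hsim ht hstepν a R0 hR0pos hsuppν κ1 Mv hκ10 hκ11
        hMv0 hMvge hξ1eq (fuel Mv δ) δ h0 (fuel_spec hMv0 hMv1 h0)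
  -- the sums with exponent slack
  have hS2gt : 1 < ∑ i, (p i * s i ^ r) ^ (1 - w * (1 - κ1)) := by
    conv_lhs => rw [← hξ2eq]
    apply Finset.sum_lt_sum_of_nonempty Finset.univ_nonempty
    intro i _
    exact Real.rpow_lt_rpow_of_exponent_gt (hu0 i) (hu1 i) (by linarith)
  have hS'gt : 1 < ∑ i, (p i * s i ^ r) ^ (w * κ1) := by
    conv_lhs => rw [← hξ2eq]
    apply Finset.sum_lt_sum_of_nonempty Finset.univ_nonempty
    intro i _
    exact Real.rpow_lt_rpow_of_exponent_gt (hu0 i) (hu1 i) hwκ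
  -- the constants
  have hRr : (0:ℝ) < R0 ^ r := Real.rpow_pos_of_pos hR0pos r
  obtain ⟨K₂, hK₂0, hKK⟩ : ∃ K₂ : ℝ, 0 ≤ K₂ ∧
      p0 * R0 ^ r + K₂ ≤ K₂ * ∑ i, (p i * s i ^ r) ^ (1 - w * (1 - κ1)) := by
    refine ⟨p0 * R0 ^ r / (∑ i, (p i * s i ^ r) ^ (1 - w * (1 - κ1)) - 1), ?_, ?_⟩
    · apply div_nonneg (by positivity) (by linarith)
    · have h : p0 * R0 ^ r / (∑ i, (p i * s i ^ r) ^ (1 - w * (1 - κ1)) - 1)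
          * (∑ i, (p i * s i ^ r) ^ (1 - w * (1 - κ1)) - 1) = p0 * R0 ^ r :=
        div_mul_cancel₀ _ (by linarith)
      nlinarith
  obtain ⟨K, hKbase, hKc, hK0⟩ : ∃ K : ℝ,
      (R0 ^ r + K₂ * (1 / cu) ^ (w * (1 - κ1)) ≤ K) ∧
      (K₂ * (1 / cu) ^ (w * (1 - κ1) - (1 - κ2)) ≤ K) ∧ 0 ≤ K := by
    refine ⟨R0 ^ r + K₂ * (1 / cu) ^ (w * (1 - κ1))
      + K₂ * (1 / cu) ^ (w * (1 - κ1) - (1 - κ2)), ?_, ?_, ?_⟩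
    · have : (0:ℝ) ≤ K₂ * (1 / cu) ^ (w * (1 - κ1) - (1 - κ2)) := by
        apply mul_nonneg hK₂0 (Real.rpow_nonneg (by positivity) _)
      linarith
    · have h1 : (0:ℝ) ≤ K₂ * (1 / cu) ^ (w * (1 - κ1)) := by
        apply mul_nonneg hK₂0 (Real.rpow_nonneg (by positivity) _)
      linarith
    · have h1 : (0:ℝ) ≤ K₂ * (1 / cu) ^ (w * (1 - κ1)) := by
        apply mul_nonneg hK₂0 (Real.rpow_nonneg (by positivity) _)
      have h2 : (0:ℝ) ≤ K₂ * (1 / cu) ^ (w * (1 - κ1) - (1 - κ2)) := by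
        apply mul_nonneg hK₂0 (Real.rpow_nonneg (by positivity) _)
      linarith
  obtain ⟨K₂', hK₂'0, hS'ineq⟩ : ∃ K₂' : ℝ, 0 ≤ K₂' ∧
      cv ^ (-κ1) + K₂' ≤ K₂' * ∑ i, (p i * s i ^ r) ^ (w * κ1) := by
    refine ⟨cv ^ (-κ1) / (∑ i, (p i * s i ^ r) ^ (w * κ1) - 1), ?_, ?_⟩
    · apply div_nonneg (Real.rpow_nonneg hcv0.le _) (by linarith)
    · have h : cv ^ (-κ1) / (∑ i, (p i * s i ^ r) ^ (w * κ1) - 1)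
          * (∑ i, (p i * s i ^ r) ^ (w * κ1) - 1) = cv ^ (-κ1) :=
        div_mul_cancel₀ _ (by linarith)
      nlinarith
  obtain ⟨K', hK'1, hK'ineq⟩ : ∃ K' : ℝ, 1 ≤ K' ∧ 1 + K₂' ≤ K' * cu ^ κ2 := by
    refine ⟨(1 + K₂') * cu ^ (-κ2), ?_, ?_⟩
    · have h1 : (1:ℝ) ≤ cu ^ (-κ2) :=
        Real.one_le_rpow_of_pos_of_le_one_of_nonpos hcu0 hcu1 (by linarith)
      nlinarith
    · have h2 : (1 + K₂') * cu ^ (-κ2) * cu ^ κ2 = (1 + K₂') * (cu ^ (-κ2) * cu ^ κ2) := by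
        ring
      rw [h2, ← Real.rpow_add hcu0, neg_add_cancel, Real.rpow_zero, mul_one]
  -- the key estimate for each n
  have key : ∀ n : ℕ, K' ≤ (n:ℝ) →
      ENNReal.ofReal ((n:ℝ) ^ (r/ξ2) * quantErr μ r n ^ r)
        ≤ ENNReal.ofReal (K * K' ^ ((1 - κ2)/κ2)) := by
    intro n hn
    have hn0 : (0:ℝ) < n := lt_of_lt_of_le (lt_of_lt_of_le one_pos hK'1) hn
    have hK'0 : (0:ℝ) < K' := lt_of_lt_of_le one_pos hK'1
    obtain ⟨δ, hδdef⟩ : ∃ x : ℝ, x = (K'/(n:ℝ)) ^ (κ2⁻¹) := ⟨_, rfl⟩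
    have hδ0 : 0 < δ := by rw [hδdef]; positivity
    have hδ1 : δ ≤ 1 := by
      rw [hδdef]
      apply Real.rpow_le_one (by positivity) ((div_le_one hn0).mpr hn) (by positivity)
    have hδc : δ ≤ 1 / cu := le_trans hδ1 ((le_div_iff₀ hcu0).mpr (by nlinarith))
    have hδκ : δ ^ (-κ2) = (n:ℝ) / K' := by
      rw [hδdef, ← Real.rpow_mul (by positivity),
        show κ2⁻¹ * (-κ2) = -1 by field_simp, Real.rpow_neg_one, inv_div]
    have hcard := codeM_card f a (fun i => p i * s i ^ r) νc w hw0 κ1 κ2 cu Mu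
      (cv ^ (-κ1)) K' K₂' hκ10 hκ20 hcu0 hMu0 hcule hMuge hu0 hξ2eq hνcard hK₂'0
      hS'ineq hK'ineq (fuel Mu δ) δ hδ0 hδc (fuel_spec hMu0 hMu1 hδ0)
    have herr := codeM_err μ ν f s p r hr hs0 hsim hp p0 hp0 hstepμ a R0 hR0pos hsuppμ
      νc hνne κ1 κ2 w cu Mu K K₂ hκ10 hκ11 hκ20 hκ21 hw0 hcu0 hMu0 hcule hMuge hξ2eq
      hνerr hK₂0 hwe hKK hKbase hKc (fuel Mu δ) δ hδ0 hδc (fuel_spec hMu0 hMu1 hδ0)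
    set α := codeM f a (fun i => p i * s i ^ r) νc w (fuel Mu δ) δ with hαdef
    have hαne : α.Nonempty := codeM_nonempty f a _ νc w hνne _ _
    have hcard' : α.card ≤ n := by
      have h2 : (0:ℝ) ≤ K₂' * δ ^ (-(w*κ1)) :=
        mul_nonneg hK₂'0 (Real.rpow_nonneg hδ0.le _)
      have h1 : (α.card : ℝ) ≤ K' * ((n:ℝ)/K') := by
        rw [← hδκ]
        linarith [hcard]
      have h3 : K' * ((n:ℝ)/K') = (n:ℝ) := by field_simp
      exact_mod_cast h1.trans_eq h3
    have herr2 : ∫⁻ x, ENNReal.ofReal (infDist x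
        ((α : Finset (EuclideanSpace ℝ (Fin q))) : Set (EuclideanSpace ℝ (Fin q))) ^ r) ∂μ
        ≤ ENNReal.ofReal (K * δ ^ (1-κ2)) := by
      refine herr.trans (ENNReal.ofReal_le_ofReal ?_)
      have h4 : (0:ℝ) ≤ K₂ * δ ^ (w * (1 - κ1)) :=
        mul_nonneg hK₂0 (Real.rpow_nonneg hδ0.le _)
      linarith
    have hintnn : 0 ≤ ∫ x, infDist x ((α : Finset (EuclideanSpace ℝ (Fin q))) :
        Set (EuclideanSpace ℝ (Fin q))) ^ r ∂μ :=
      integral_nonneg fun x => Real.rpow_nonneg infDist_nonneg r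
    have hint : ∫ x, infDist x ((α : Finset (EuclideanSpace ℝ (Fin q))) :
        Set (EuclideanSpace ℝ (Fin q))) ^ r ∂μ ≤ K * δ ^ (1-κ2) := by
      rw [integral_eq_lintegral_of_nonneg_ae
        (Eventually.of_forall fun x => Real.rpow_nonneg infDist_nonneg r)
        (Continuous.aestronglyMeasurable
          ((continuous_infDist_pt _).rpow_const (fun x => Or.inr hr.le)))]
      exact ENNReal.toReal_le_of_le_ofReal
        (mul_nonneg hK0 (Real.rpow_nonneg hδ0.le _)) herr2
    -- quantization error bound
    have hbdd : BddBelow ((fun α : Finset (EuclideanSpace ℝ (Fin q)) =>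
        (∫ x, infDist x (α : Set (EuclideanSpace ℝ (Fin q))) ^ r ∂μ) ^ (1 / r)) ''
        {α : Finset (EuclideanSpace ℝ (Fin q)) | α.Nonempty ∧ α.card ≤ n}) := by
      refine ⟨0, ?_⟩
      rintro y ⟨β, _, rfl⟩
      exact Real.rpow_nonneg (integral_nonneg fun x => Real.rpow_nonneg infDist_nonneg r) _
    have hq_le : quantErr μ r n ≤ (∫ x, infDist x ((α : Finset (EuclideanSpace ℝ (Fin q))) :
        Set (EuclideanSpace ℝ (Fin q))) ^ r ∂μ) ^ (1/r) :=
      csInf_le hbdd ⟨α, ⟨hαne, hcard'⟩, rfl⟩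
    have hq0 : 0 ≤ quantErr μ r n := by
      apply Real.sInf_nonneg
      rintro y ⟨β, _, rfl⟩
      exact Real.rpow_nonneg (integral_nonneg fun x => Real.rpow_nonneg infDist_nonneg r) _
    have hqr : quantErr μ r n ^ r ≤ K * δ ^ (1-κ2) := by
      have h1 : quantErr μ r n ^ r ≤ ((∫ x, infDist x ((α : Finset (EuclideanSpace ℝ (Fin q))) :
          Set (EuclideanSpace ℝ (Fin q))) ^ r ∂μ) ^ (1/r)) ^ r :=
        Real.rpow_le_rpow hq0 hq_le hr.le
      have h2 : ((∫ x, infDist x ((α : Finset (EuclideanSpace ℝ (Fin q))) :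
          Set (EuclideanSpace ℝ (Fin q))) ^ r ∂μ) ^ (1/r)) ^ r
          = ∫ x, infDist x ((α : Finset (EuclideanSpace ℝ (Fin q))) :
          Set (EuclideanSpace ℝ (Fin q))) ^ r ∂μ := by
        rw [← Real.rpow_mul hintnn, one_div, inv_mul_cancel₀ hr.ne', Real.rpow_one]
      linarith
    apply ENNReal.ofReal_le_ofReal
    have hθeq : r/ξ2 = (1-κ2)/κ2 := by
      rw [hκ2def]
      field_simp; ring
    have hδθ : δ ^ (1-κ2) = K' ^ ((1-κ2)/κ2) * (n:ℝ) ^ (-((1-κ2)/κ2)) := by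
      rw [hδdef, ← Real.rpow_mul (by positivity),
        show κ2⁻¹ * (1-κ2) = (1-κ2)/κ2 by rw [inv_mul_eq_div],
        Real.div_rpow hK'0.le hn0.le, Real.rpow_neg hn0.le, div_eq_mul_inv]
    calc (n:ℝ)^(r/ξ2) * quantErr μ r n ^ r
        ≤ (n:ℝ)^(r/ξ2) * (K * δ^(1-κ2)) :=
          mul_le_mul_of_nonneg_left hqr (Real.rpow_nonneg hn0.le _)
      _ = K * K' ^ ((1-κ2)/κ2) * ((n:ℝ) ^ ((1-κ2)/κ2) * (n:ℝ) ^ (-((1-κ2)/κ2))) := by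
          rw [hθeq, hδθ]; ring
      _ = K * K' ^ ((1-κ2)/κ2) := by
          rw [← Real.rpow_add hn0, add_neg_cancel, Real.rpow_zero, mul_one]
  -- conclude
  have hev : ∀ᶠ n : ℕ in atTop, ENNReal.ofReal ((n:ℝ) ^ (r/ξ2) * quantErr μ r n ^ r)
      ≤ ENNReal.ofReal (K * K' ^ ((1 - κ2)/κ2)) := by
    filter_upwards [eventually_ge_atTop ⌈K'⌉₊] with n hn
    apply key
    calc K' ≤ (⌈K'⌉₊ : ℝ) := Nat.le_ceil _
      _ ≤ n := by exact_mod_cast hn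
  calc Filter.limsup (fun n : ℕ =>
        ENNReal.ofReal ((n:ℝ) ^ (r/ξ2) * quantErr μ r n ^ r)) atTop
      ≤ ENNReal.ofReal (K * K' ^ ((1 - κ2)/κ2)) := limsup_le_of_le (by isBoundedDefault) hev
    _ < ⊤ := ENNReal.ofReal_lt_top
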